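/- Let 0 < μ < 1, 0 < h < 1/μ, and N ≥ 1 an integer, and set τ = μ / (μ − 1 + (1 − μh)^{−2N}), which is a positive real number. Define ℓ: ℝ → ℝ by ℓ(x) = (1/2)·x² if |x| ≤ τ, and ℓ(x) = (μ/2)·x² + (1−μ)·τ·|x| − ((1−μ)/2)·τ² if |x| ≥ τ. Then ℓ is μ-strongly convex and differentiable with derivative that is Lipschitz continuous with constant 1 (i.e., ℓ belongs to the class of 1-smooth μ-strongly convex functions on ℝ). -/

import Mathlib

lemma sqmax_hasDeriv (y : ℝ) :
    HasDerivAt (fun y : ℝ => max y 0 ^ 2) (2 * max y 0) y := by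
  rcases lt_trichotomy y 0 with hy | hy | hy
  · have hmax : max y 0 = 0 := max_eq_right hy.le
    rw [hmax, mul_zero]
    have : (fun y : ℝ => max y 0 ^ 2) =ᶠ[nhds y] fun _ => (0:ℝ) := by
      filter_upwards [Iio_mem_nhds hy] with z hz
      simp [max_eq_right (le_of_lt (Set.mem_Iio.mp hz))]
    exact (hasDerivAt_const y (0:ℝ)).congr_of_eventuallyEq this
  · subst hy
    simp only [max_self, mul_zero]
    rw [hasDerivAt_iff_tendsto_slope]
    refine squeeze_zero_norm (a := fun z => |z|) ?_ ?_
    · intro z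
      rcases eq_or_ne z 0 with rfl | hz
      · simp [slope]
      · have : slope (fun y : ℝ => max y 0 ^ 2) 0 z = max z 0 ^ 2 / z := by
          simp [slope, div_eq_inv_mul]
        rw [this]
        have h1 : |max z 0| ≤ |z| := by
          rcases le_total z 0 with h | h
          · simp [max_eq_right h]
          · simp [max_eq_left h, abs_of_nonneg h]
        calc ‖max z 0 ^ 2 / z‖ = |max z 0| * |max z 0| / |z| := by
              simp [norm_div, sq, abs_mul]
          _ ≤ |z| * |z| / |z| := by
              have := mul_le_mul h1 h1 (abs_nonneg _) (abs_nonneg _)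
              apply div_le_div_of_nonneg_right this
              exact (abs_pos.mpr hz).le
          _ = |z| := by field_simp
    · have : Filter.Tendsto (fun z : ℝ => |z|) (nhds (0:ℝ)) (nhds |(0:ℝ)|) :=
        continuous_abs.tendsto (0:ℝ)
      rw [abs_zero] at this
      exact this.mono_left nhdsWithin_le_nhds
  · have hmax : max y 0 = y := max_eq_left hy.le
    rw [hmax]
    have : (fun y : ℝ => max y 0 ^ 2) =ᶠ[nhds y] fun z => z ^ 2 := by
      filter_upwards [Ioi_mem_nhds hy] with z hz
      simp [max_eq_left (le_of_lt (Set.mem_Ioi.mp hz))]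
    have h2 : HasDerivAt (fun z : ℝ => z ^ 2) (2 * y) y := by
      simpa using (hasDerivAt_pow 2 y)
    exact h2.congr_of_eventuallyEq this

/-- The Huber-type worst-case function `ℓ_{μ,h}` of the performance estimation
literature: with threshold `τ = μ/(μ − 1 + (1 − μh)^{−2N}) > 0`, the function `ℓ`
is `μ`-strongly convex and `1`-smooth (differentiable with `1`-Lipschitz derivative). -/
theorem huber_worst_case_function_smooth_strongly_convex
    (μ h : ℝ) (N : ℕ) (hμ0 : 0 < μ) (hμ1 : μ < 1)
    (hh0 : 0 < h) (hh1 : h < 1 / μ) (hN : 1 ≤ N)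
    (τ : ℝ) (hτ : τ = μ / (μ - 1 + ((1 - μ * h) ^ (2 * N))⁻¹))
    (ℓ : ℝ → ℝ)
    (hℓ : ∀ x : ℝ, ℓ x =
      if |x| ≤ τ then (1 / 2) * x ^ 2
      else (μ / 2) * x ^ 2 + (1 - μ) * τ * |x| - ((1 - μ) / 2) * τ ^ 2) :
    0 < τ ∧
      ConvexOn ℝ Set.univ (fun x => ℓ x - (μ / 2) * x ^ 2) ∧
      Differentiable ℝ ℓ ∧
      LipschitzWith 1 (deriv ℓ) := by
  -- positivity of τ
  have hμh : μ * h < 1 := by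
    rw [lt_div_iff₀ hμ0] at hh1; linarith [hh1]
  have hbase0 : 0 < 1 - μ * h := by linarith
  have hbase1 : 1 - μ * h < 1 := by nlinarith
  have hr0 : 0 < (1 - μ * h) ^ (2 * N) := pow_pos hbase0 _
  have hr1 : (1 - μ * h) ^ (2 * N) < 1 := pow_lt_one₀ hbase0.le hbase1 (by omega)
  have hinv : 1 < ((1 - μ * h) ^ (2 * N))⁻¹ := by
    rw [lt_inv_comm₀ (by norm_num) hr0]; simpa using hr1
  have hden : 0 < μ - 1 + ((1 - μ * h) ^ (2 * N))⁻¹ := by linarith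
  have hτ0 : 0 < τ := hτ ▸ div_pos hμ0 hden
  -- the clamp function
  set P : ℝ → ℝ := fun x => min (max x (-τ)) τ with hP
  -- alternative formula for ℓ
  have hform : ∀ x : ℝ, ℓ x =
      (1 / 2) * x ^ 2 - ((1 - μ) / 2) * (max (x - τ) 0 ^ 2 + max (-x - τ) 0 ^ 2) := by
    intro x
    rw [hℓ x]
    rcases le_or_gt |x| τ with hx | hx
    · rw [if_pos hx]
      rw [abs_le] at hx
      rw [max_eq_right (by linarith), max_eq_right (by linarith)]
      ring
    · rw [if_neg (not_le.mpr hx)]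
      rcases abs_cases x with ⟨hax, hsx⟩ | ⟨hax, hsx⟩
      · rw [hax] at hx ⊢
        rw [max_eq_left (by linarith), max_eq_right (by linarith)]
        ring
      · rw [hax] at hx ⊢
        rw [max_eq_right (by linarith), max_eq_left (by linarith)]
        ring
  -- derivative of ℓ
  have hderiv : ∀ x : ℝ, HasDerivAt ℓ (μ * x + (1 - μ) * P x) x := by
    intro x
    have h1 : HasDerivAt (fun x : ℝ => max (x - τ) 0 ^ 2) (2 * max (x - τ) 0) x := by
      have hin : HasDerivAt (fun x : ℝ => x - τ) 1 x := by
        simpa using (hasDerivAt_id x).sub_const τ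
      simpa [Function.comp_def] using (sqmax_hasDeriv (x - τ)).comp x hin
    have h2 : HasDerivAt (fun x : ℝ => max (-x - τ) 0 ^ 2) (2 * max (-x - τ) 0 * (-1)) x := by
      have hin : HasDerivAt (fun x : ℝ => -x - τ) (-1) x := by
        simpa using ((hasDerivAt_id x).neg.sub_const τ)
      exact (sqmax_hasDeriv (-x - τ)).comp x hin
    have h3 : HasDerivAt (fun x : ℝ =>
        (1 / 2) * x ^ 2 - ((1 - μ) / 2) * (max (x - τ) 0 ^ 2 + max (-x - τ) 0 ^ 2))
        ((1 / 2) * (2 * x) - ((1 - μ) / 2) *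
          (2 * max (x - τ) 0 + 2 * max (-x - τ) 0 * (-1))) x := by
      exact (((hasDerivAt_pow 2 x).const_mul (1/2 : ℝ)).sub
        (((h1.add h2).const_mul ((1 - μ) / 2)))).congr_deriv (by push_cast; ring)
    have heq : (fun x : ℝ =>
        (1 / 2) * x ^ 2 - ((1 - μ) / 2) * (max (x - τ) 0 ^ 2 + max (-x - τ) 0 ^ 2)) = ℓ := by
      funext z; rw [hform z]
    rw [heq] at h3
    have hd : (1 / 2) * (2 * x) - ((1 - μ) / 2) *
          (2 * max (x - τ) 0 + 2 * max (-x - τ) 0 * (-1)) = μ * x + (1 - μ) * P x := by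
      rcases le_total x (-τ) with h1 | h1
      · rw [max_eq_right (by linarith), max_eq_left (by linarith)]
        have hPx : P x = -τ := by
          simp only [hP]; rw [max_eq_right h1, min_eq_left (by linarith)]
        rw [hPx]; ring
      · rcases le_total τ x with h2 | h2
        · rw [max_eq_left (by linarith), max_eq_right (by linarith)]
          have hPx : P x = τ := by
            simp only [hP]; rw [max_eq_left (by linarith), min_eq_right h2]
          rw [hPx]; ring
        · rw [max_eq_right (by linarith), max_eq_right (by linarith)]
          have hPx : P x = x := by
            simp only [hP]; rw [max_eq_left h1, min_eq_left h2]
          rw [hPx]; ring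
    rwa [hd] at h3
  have hdiff : Differentiable ℝ ℓ := fun x => (hderiv x).differentiableAt
  -- monotonicity and lipschitzness of P
  have hPmono : Monotone P := by
    intro a b hab
    exact min_le_min (max_le_max hab le_rfl) le_rfl
  have hPlip : ∀ a b : ℝ, a ≤ b → P b - P a ≤ b - a := by
    intro a b hab
    simp only [hP, max_def, min_def]
    split_ifs <;> linarith
  have hPabs : ∀ a b : ℝ, |P a - P b| ≤ |a - b| := by
    intro a b
    rcases le_total a b with hab | hab
    · rw [abs_sub_comm, abs_of_nonneg (by linarith [hPmono hab]),
        abs_sub_comm, abs_of_nonneg (by linarith)]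
      exact hPlip a b hab
    · rw [abs_of_nonneg (by linarith [hPmono hab]), abs_of_nonneg (by linarith)]
      exact hPlip b a hab
  refine ⟨hτ0, ?_, hdiff, ?_⟩
  · -- convexity of ℓ - (μ/2) x²
    have hF : ∀ x : ℝ, HasDerivAt (fun x => ℓ x - (μ / 2) * x ^ 2) ((1 - μ) * P x) x := by
      intro x
      have := (hderiv x).sub ((hasDerivAt_pow 2 x).const_mul (μ / 2))
      exact this.congr_deriv (by push_cast; ring)
    have hdF : deriv (fun x => ℓ x - (μ / 2) * x ^ 2) = fun x => (1 - μ) * P x := by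
      funext x; exact (hF x).deriv
    apply MonotoneOn.convexOn_of_deriv convex_univ
    · exact (Differentiable.continuous (fun x => (hF x).differentiableAt)).continuousOn
    · exact fun x _ => ((hF x).differentiableAt).differentiableWithinAt
    · rw [interior_univ, hdF]
      exact (hPmono.const_mul (by linarith : (0:ℝ) ≤ 1 - μ)).monotoneOn _
  · -- Lipschitz derivative
    have hdℓ : deriv ℓ = fun x => μ * x + (1 - μ) * P x := by
      funext x; exact (hderiv x).deriv
    rw [hdℓ]
    apply LipschitzWith.of_dist_le_mul
    intro a b
    simp only [Real.dist_eq, NNReal.coe_one, one_mul]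
    have key : μ * a + (1 - μ) * P a - (μ * b + (1 - μ) * P b)
        = μ * (a - b) + (1 - μ) * (P a - P b) := by ring
    rw [key]
    calc |μ * (a - b) + (1 - μ) * (P a - P b)|
        ≤ |μ * (a - b)| + |(1 - μ) * (P a - P b)| := abs_add_le _ _
      _ = μ * |a - b| + (1 - μ) * |P a - P b| := by
          rw [abs_mul, abs_mul, abs_of_pos hμ0, abs_of_pos (show (0:ℝ) < 1 - μ by linarith)]
      _ ≤ μ * |a - b| + (1 - μ) * |a - b| := by
          have := hPabs a b
          nlinarith
      _ = |a - b| := by ring
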